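/- Let δ₂ = γ₂⁻¹γ₁ where γ₁ = B·[[0,1],[-1,5-2i]]·B⁻¹, γ₂(t) = [[0,1],[-1,5+(t-2)i]], B = [[1,10],[0,1]]. Then the isometric sphere I(δ₂(t)) is contained in the open Euclidean half-ball bounded by the isometric sphere I(γ₁): that is, if z(t) and r(t) are the center and radius of I(δ₂(t)) and z₁, r₁ = 1 those of I(γ₁), then |z(t) - z₁| + r(t) < 1 for all t ∈ [0,4]. -/

import Mathlib

open Complex

/-- Euclidean center `-d/c` of the isometric sphere of a matrix `[[a,b],[c,d]]`. -/
noncomputable def sphereCenter (M : Matrix (Fin 2) (Fin 2) ℂ) : ℂ := -(M 1 1) / M 1 0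

/-- Euclidean radius `1/|c|` of the isometric sphere of a matrix `[[a,b],[c,d]]`. -/
noncomputable def sphereRadius (M : Matrix (Fin 2) (Fin 2) ℂ) : ℝ := 1 / ‖M 1 0‖

/-- `B = [[1,10],[0,1]]`. -/
noncomputable def Bmat : Matrix (Fin 2) (Fin 2) ℂ := !![1, 10; 0, 1]

/-- `γ₁ = B [[0,1],[-1,5-2i]] B⁻¹`. -/
noncomputable def g1 : Matrix (Fin 2) (Fin 2) ℂ :=
  Bmat * !![0, 1; -1, 5 - 2 * Complex.I] * Bmat⁻¹

/-- `γ₂(t) = [[0,1],[-1,5+(t-2)i]]`. -/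
noncomputable def g2 (t : ℝ) : Matrix (Fin 2) (Fin 2) ℂ :=
  !![0, 1; -1, 5 + (t - 2) * Complex.I]

/-- `δ₂(t) = γ₂(t)⁻¹ γ₁`. -/
noncomputable def δ2 (t : ℝ) : Matrix (Fin 2) (Fin 2) ℂ := (g2 t)⁻¹ * g1

lemma Binv : Bmat⁻¹ = !![1, -10; 0, 1] := by
  apply Matrix.inv_eq_right_inv
  simp [Bmat, Matrix.mul_fin_two, Matrix.one_fin_two]

lemma g1_eq : g1 = !![-10, 151 - 20 * Complex.I; -1, 15 - 2 * Complex.I] := by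
  rw [g1, Binv]
  simp [Bmat, Matrix.mul_fin_two]
  norm_num
  ring_nf
  exact ⟨trivial, trivial⟩

lemma g2inv (t : ℝ) : (g2 t)⁻¹ = !![5 + (t - 2) * Complex.I, -1; 1, 0] := by
  apply Matrix.inv_eq_right_inv
  simp [g2, Matrix.mul_fin_two, Matrix.one_fin_two]

lemma δ2_eq (t : ℝ) : δ2 t = !![(5 + (t - 2) * Complex.I) * (-10) + 1,
    (5 + (t - 2) * Complex.I) * (151 - 20 * Complex.I) - (15 - 2 * Complex.I);
    -10, 151 - 20 * Complex.I] := by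
  rw [δ2, g2inv, g1_eq]
  simp [Matrix.mul_fin_two]
  ring_nf

/-- For all `t ∈ [0,4]`, the isometric sphere `I(δ₂(t))` is contained in the open
Euclidean half-ball bounded by `I(γ₁)`: with `z(t), r(t)` the center and radius of
`I(δ₂(t))` and `z₁, r₁ = 1` those of `I(γ₁)`, one has `|z(t) - z₁| + r(t) < 1`. -/
theorem delta_sphere_contained :
    ∀ t ∈ Set.Icc (0 : ℝ) 4,
      sphereRadius g1 = 1 ∧
      ‖sphereCenter (δ2 t) - sphereCenter g1‖ + sphereRadius (δ2 t) < 1 := by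
  intro t ht
  have h10 : ((δ2 t) 1 0) = -10 := by rw [δ2_eq]; simp
  have h11 : ((δ2 t) 1 1) = 151 - 20 * Complex.I := by rw [δ2_eq]; simp
  have hg10 : (g1 1 0) = -1 := by rw [g1_eq]; simp
  have hg11 : (g1 1 1) = 15 - 2 * Complex.I := by rw [g1_eq]; simp
  constructor
  · rw [sphereRadius, hg10]
    simp
  · rw [sphereCenter, sphereCenter, sphereRadius, h10, h11, hg10, hg11]
    have : -(151 - 20 * Complex.I) / (-10) - -(15 - 2 * Complex.I) / (-1) = (1/10 : ℂ) := by
      ring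
    rw [this]
    have h1 : ‖(1/10 : ℂ)‖ = 1/10 := by
      rw [show ((1:ℂ)/10) = ((1/10 : ℝ) : ℂ) by norm_num, Complex.norm_real]
      norm_num
    have h2 : ‖(-10 : ℂ)‖ = 10 := by
      rw [show ((-10:ℂ)) = ((-10 : ℝ) : ℂ) by norm_num, Complex.norm_real]
      norm_num
    rw [h1, h2]
    norm_num
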